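/- For a lattice path x = (A ←f L →α [n]) and elements a ≠ b ∈ A, define w_x(a,b) = |L|_{a,b}/∼| − 1, where L|_{a,b} = f⁻¹(a) ∪ f⁻¹(b) and l ∼ l′ (for l < l′) iff f is constant on {m ∈ L|_{a,b} : l ≤ m ≤ l′}. Then for every simplicial operator ρ*: ℒ(A;n)_{a↦m} → ℒ(A;n)_{a↦k} induced by a monotone map ρ: [k] → [m], and all pairs {x,y} ⊆ A, one has w_{ρ*z}(x,y) ≤ w_z(x,y). Consequently ℒ_m(A;n) = {z | w(z) ≤ m} is closed under all simplicial and cosimplicial operators. -/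

import Mathlib

/-- The weight `w_z(x,y)` of a lattice path `A ←f L → [n]` between `x` and `y`:
the number of alternation boundaries in the restriction of `f` to `f⁻¹{x,y}`
(i.e. the number of equivalence classes minus one).  It does not depend on the
augmentation `α : L → [n]`. -/
def wgt {L A : Type} [LinearOrder L] [Fintype L] [DecidableEq A]
    (f : L → A) (x y : A) : ℕ :=
  (Finset.univ.filter fun p : L × L =>
    p.1 < p.2 ∧ (f p.1 = x ∨ f p.1 = y) ∧ (f p.2 = x ∨ f p.2 = y) ∧ f p.1 ≠ f p.2 ∧
      ∀ q, p.1 < q → q < p.2 → f q ≠ x ∧ f q ≠ y).card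

/-- The linear order `L[[k]/[m]]` underlying the simplicial operator `ρ*` in the
`a`-direction: the fibre `f⁻¹(a) ≅ [m]` (via `e`) is replaced by `[k]` according to
`ρ : [k] → [m]`; the new element `j ∈ [k]` is placed at the position of the old element
`ρ(j)`, and elements of `[k]` at the same position are ordered among themselves. -/
def NewL {L A : Type} [LinearOrder L] [Fintype L] [DecidableEq L] [DecidableEq A]
    (f : L → A) (a : A) {m k : ℕ} (e : Fin (m + 1) ≃o {l : L // f l = a})
    (ρ : Fin (k + 1) →o Fin (m + 1)) : Type :=
  {p : Lex (L × Fin (k + 2)) //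
    (f (ofLex p).1 ≠ a ∧ (ofLex p).2 = 0) ∨
    (∃ j : Fin (k + 1), (ofLex p).1 = (e (ρ j) : L) ∧ (ofLex p).2 = j.succ)}

noncomputable instance {L A : Type} [LinearOrder L] [Fintype L] [DecidableEq L]
    [DecidableEq A] (f : L → A) (a : A) {m k : ℕ}
    (e : Fin (m + 1) ≃o {l : L // f l = a}) (ρ : Fin (k + 1) →o Fin (m + 1)) :
    Fintype (NewL f a e ρ) := by
  classical
  unfold NewL
  have : Fintype (Lex (L × Fin (k + 2))) := Fintype.ofEquiv _ toLex
  exact Fintype.ofFinite _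

instance {L A : Type} [LinearOrder L] [Fintype L] [DecidableEq L] [DecidableEq A]
    (f : L → A) (a : A) {m k : ℕ} (e : Fin (m + 1) ≃o {l : L // f l = a})
    (ρ : Fin (k + 1) →o Fin (m + 1)) : LinearOrder (NewL f a e ρ) := by
  unfold NewL; infer_instance

/-- The labelling of `L[[k]/[m]]` by symbols of `A`: old elements keep their symbol,
the new elements of `[k]` are labelled `a`. -/
def newF {L A : Type} [LinearOrder L] [Fintype L] [DecidableEq L] [DecidableEq A]
    (f : L → A) (a : A) {m k : ℕ} (e : Fin (m + 1) ≃o {l : L // f l = a})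
    (ρ : Fin (k + 1) →o Fin (m + 1)) (p : NewL f a e ρ) : A :=
  if (ofLex p.1).2 = 0 then f (ofLex p.1).1 else a


open Classical in
private noncomputable def nxtEl {L A : Type} [LinearOrder L] [Fintype L]
    (f : L → A) (x y : A) (l : L) : L :=
  if h : (Finset.univ.filter (fun q : L => l < q ∧ (f q = x ∨ f q = y))).Nonempty
  then (Finset.univ.filter (fun q : L => l < q ∧ (f q = x ∨ f q = y))).min' h else l

open Classical in
private noncomputable def prvEl {L A : Type} [LinearOrder L] [Fintype L]
    (f : L → A) (x y : A) (l : L) : L :=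
  if h : (Finset.univ.filter (fun q : L => q < l ∧ (f q = x ∨ f q = y))).Nonempty
  then (Finset.univ.filter (fun q : L => q < l ∧ (f q = x ∨ f q = y))).max' h else l

private lemma nxtEl_spec {L A : Type} [LinearOrder L] [Fintype L]
    (f : L → A) (x y : A) (l q0 : L) (h1 : l < q0) (h2 : f q0 = x ∨ f q0 = y) :
    l < nxtEl f x y l ∧ (f (nxtEl f x y l) = x ∨ f (nxtEl f x y l) = y) ∧
      nxtEl f x y l ≤ q0 ∧
      ∀ q, l < q → q < nxtEl f x y l → ¬(f q = x ∨ f q = y) := by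
  classical
  have hne : (Finset.univ.filter (fun q : L => l < q ∧ (f q = x ∨ f q = y))).Nonempty :=
    ⟨q0, by simp [h1, h2]⟩
  unfold nxtEl
  rw [dif_pos hne]
  have hmem := Finset.min'_mem _ hne
  simp only [Finset.mem_filter, Finset.mem_univ, true_and] at hmem
  refine ⟨hmem.1, hmem.2, Finset.min'_le _ _ (by simp [h1, h2]), ?_⟩
  intro q hq1 hq2 hq3
  exact absurd (Finset.min'_le _ q (by simp [hq1, hq3])) (not_le.mpr hq2)

private lemma prvEl_spec {L A : Type} [LinearOrder L] [Fintype L]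
    (f : L → A) (x y : A) (l q0 : L) (h1 : q0 < l) (h2 : f q0 = x ∨ f q0 = y) :
    prvEl f x y l < l ∧ (f (prvEl f x y l) = x ∨ f (prvEl f x y l) = y) ∧
      q0 ≤ prvEl f x y l ∧
      ∀ q, prvEl f x y l < q → q < l → ¬(f q = x ∨ f q = y) := by
  classical
  have hne : (Finset.univ.filter (fun q : L => q < l ∧ (f q = x ∨ f q = y))).Nonempty :=
    ⟨q0, by simp [h1, h2]⟩
  unfold prvEl
  rw [dif_pos hne]
  have hmem := Finset.max'_mem _ hne
  simp only [Finset.mem_filter, Finset.mem_univ, true_and] at hmem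
  refine ⟨hmem.1, hmem.2, Finset.le_max' _ _ (by simp [h1, h2]), ?_⟩
  intro q hq1 hq2 hq3
  exact absurd (Finset.le_max' _ q (by simp [hq2, hq3])) (not_le.mpr hq1)
set_option maxHeartbeats 1000000 in
/-- for every simplicial operator `ρ* : ℒ(A;n)_{a↦m} → ℒ(A;n)_{a↦k}` in the
`a`-direction, induced by a monotone `ρ : [k] → [m]`, and every pair `x ≠ y` in `A`, the
weights satisfy `w_{ρ* z}(x,y) ≤ w_z(x,y)`; consequently (weights being untouched by the
cosimplicial operators) the sets `ℒ_m(A;n)` of lattice paths of weight at most `m` are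
closed under all simplicial and cosimplicial operators. -/
theorem statement16 {L A : Type} [LinearOrder L] [Fintype L] [DecidableEq L]
    [DecidableEq A] (f : L → A) (hf : Function.Surjective f) (a : A) {m k : ℕ}
    (e : Fin (m + 1) ≃o {l : L // f l = a}) (ρ : Fin (k + 1) →o Fin (m + 1))
    (x y : A) (hxy : x ≠ y) :
    wgt (newF f a e ρ) x y ≤ wgt f x y := by
  classical
  set g := newF f a e ρ with hg
  have hlt : ∀ P Q : NewL f a e ρ, P < Q ↔ ((ofLex P.val).1 < (ofLex Q.val).1 ∨
      ((ofLex P.val).1 = (ofLex Q.val).1 ∧ (ofLex P.val).2 < (ofLex Q.val).2)) := by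
    intro P Q
    have h1 : P < Q ↔ P.val < Q.val := Iff.rfl
    exact h1.trans Prod.Lex.lt_iff
  have factA : ∀ P : NewL f a e ρ, f (ofLex P.val).1 = g P := by
    rintro ⟨p, hp | ⟨j, hj1, hj2⟩⟩
    · simp [hg, newF, hp.2]
    · have h2 : f ((ofLex p).1) = a := by rw [hj1]; exact (e (ρ j)).2
      have h3 : (ofLex p).2 ≠ 0 := by rw [hj2]; exact Fin.succ_ne_zero j
      simp [hg, newF, h3, h2]
  have lift : ∀ R : L, f R ≠ a →
      ∃ W : NewL f a e ρ, (ofLex W.val).1 = R ∧ g W = f R := by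
    intro R hR
    refine ⟨⟨toLex (R, (0 : Fin (k + 2))), Or.inl ⟨by simpa using hR, by simp⟩⟩, by simp, ?_⟩
    simp [hg, newF]
  -- adjacency transferred to L away from the fibre of a
  have hbet : ∀ P Q : NewL f a e ρ,
      (∀ q, P < q → q < Q → g q ≠ x ∧ g q ≠ y) →
      ∀ R : L, (ofLex P.val).1 < R → R < (ofLex Q.val).1 → f R ≠ a →
        f R ≠ x ∧ f R ≠ y := by
    intro P Q hadj R h1 h2 h3
    obtain ⟨W, hW1, hW2⟩ := lift R h3
    have hPW : P < W := (hlt P W).2 (Or.inl (by rw [hW1]; exact h1))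
    have hWQ : W < Q := (hlt W Q).2 (Or.inl (by rw [hW1]; exact h2))
    have := hadj W hPW hWQ
    rw [hW2] at this
    exact this
  have hcoordlt : ∀ P Q : NewL f a e ρ, P < Q → g P ≠ g Q →
      (ofLex P.val).1 < (ofLex Q.val).1 := by
    intro P Q h1 h2
    rcases (hlt P Q).1 h1 with h | ⟨h, _⟩
    · exact h
    · exact absurd (by rw [← factA P, ← factA Q, h]) h2
  have main1 : ∀ P Q : NewL f a e ρ,
      P < Q → (g P = x ∨ g P = y) → (g Q = x ∨ g Q = y) → g P ≠ g Q →
      (∀ q, P < q → q < Q → g q ≠ x ∧ g q ≠ y) → g P = a →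
      (prvEl f x y (ofLex Q.val).1 < (ofLex Q.val).1 ∧
        (f (prvEl f x y (ofLex Q.val).1) = x ∨ f (prvEl f x y (ofLex Q.val).1) = y) ∧
        (f (ofLex Q.val).1 = x ∨ f (ofLex Q.val).1 = y) ∧
        f (prvEl f x y (ofLex Q.val).1) ≠ f (ofLex Q.val).1 ∧
        ∀ q, prvEl f x y (ofLex Q.val).1 < q → q < (ofLex Q.val).1 →
          f q ≠ x ∧ f q ≠ y) ∧ f (prvEl f x y (ofLex Q.val).1) = a := by
    intro P Q h1 hP hQ hne2 hadj hPa
    have hfP := factA P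
    have hfQ := factA Q
    have hPQ : (ofLex P.val).1 < (ofLex Q.val).1 := hcoordlt P Q h1 hne2
    obtain ⟨s1, s2, s3, s4⟩ :=
      prvEl_spec f x y (ofLex Q.val).1 (ofLex P.val).1 hPQ (by rw [hfP]; exact hP)
    have hQa : g Q ≠ a := fun h => hne2 (hPa.trans h.symm)
    have hprva : f (prvEl f x y (ofLex Q.val).1) = a := by
      by_contra hc
      have hne3 : (ofLex P.val).1 ≠ prvEl f x y (ofLex Q.val).1 :=
        fun h => hc (by rw [← h, hfP, hPa])
      have h5 : (ofLex P.val).1 < prvEl f x y (ofLex Q.val).1 := lt_of_le_of_ne s3 hne3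
      have := hbet P Q hadj _ h5 s1 hc
      tauto
    refine ⟨⟨s1, s2, by rw [hfQ]; exact hQ, ?_, ?_⟩, hprva⟩
    · rw [hprva, hfQ]; exact fun h => hQa h.symm
    · intro q hq1 hq2
      have := s4 q hq1 hq2
      tauto
  have main2 : ∀ P Q : NewL f a e ρ,
      P < Q → (g P = x ∨ g P = y) → (g Q = x ∨ g Q = y) → g P ≠ g Q →
      (∀ q, P < q → q < Q → g q ≠ x ∧ g q ≠ y) → g P ≠ a →
      ((ofLex P.val).1 < nxtEl f x y (ofLex P.val).1 ∧
        (f (ofLex P.val).1 = x ∨ f (ofLex P.val).1 = y) ∧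
        (f (nxtEl f x y (ofLex P.val).1) = x ∨ f (nxtEl f x y (ofLex P.val).1) = y) ∧
        f (ofLex P.val).1 ≠ f (nxtEl f x y (ofLex P.val).1) ∧
        ∀ q, (ofLex P.val).1 < q → q < nxtEl f x y (ofLex P.val).1 →
          f q ≠ x ∧ f q ≠ y) ∧ f (ofLex P.val).1 ≠ a := by
    intro P Q h1 hP hQ hne2 hadj hPa
    have hfP := factA P
    have hfQ := factA Q
    have hPQ : (ofLex P.val).1 < (ofLex Q.val).1 := hcoordlt P Q h1 hne2
    obtain ⟨s1, s2, s3, s4⟩ :=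
      nxtEl_spec f x y (ofLex P.val).1 (ofLex Q.val).1 hPQ (by rw [hfQ]; exact hQ)
    have hlab : f (ofLex P.val).1 ≠ f (nxtEl f x y (ofLex P.val).1) := by
      intro hc
      have hne3 : nxtEl f x y (ofLex P.val).1 ≠ (ofLex Q.val).1 := by
        intro h
        rw [h, hfQ] at hc
        rw [hfP] at hc
        exact hne2 hc
      have h5 : nxtEl f x y (ofLex P.val).1 < (ofLex Q.val).1 := lt_of_le_of_ne s3 hne3
      have h6 : f (nxtEl f x y (ofLex P.val).1) ≠ a := by
        rw [← hc, hfP]; exact hPa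
      have := hbet P Q hadj _ s1 h5 h6
      tauto
    refine ⟨⟨s1, by rw [hfP]; exact hP, s2, hlab, ?_⟩, by rw [hfP]; exact hPa⟩
    intro q hq1 hq2
    have := s4 q hq1 hq2
    tauto
  have coordinj : ∀ P P' : NewL f a e ρ, g P ≠ a → g P' ≠ a →
      (ofLex P.val).1 = (ofLex P'.val).1 → P = P' := by
    have hz : ∀ W : NewL f a e ρ, g W ≠ a → (ofLex W.val).2 = 0 := by
      intro W hW
      rcases W.2 with h0 | ⟨j, hj1, hj2⟩
      · exact h0.2
      · exact absurd (by rw [← factA W, hj1]; exact (e (ρ j)).2) hW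
    intro P P' h h' hcoord
    apply Subtype.ext
    apply ofLex.injective
    exact Prod.ext hcoord (by rw [hz P h, hz P' h'])
  rw [hg]
  unfold wgt
  rw [← hg]
  refine Finset.card_le_card_of_injOn
    (fun pq => if g pq.1 = a
      then (prvEl f x y (ofLex pq.2.val).1, (ofLex pq.2.val).1)
      else ((ofLex pq.1.val).1, nxtEl f x y (ofLex pq.1.val).1)) ?_ ?_
  · rintro ⟨P, Q⟩ hpq
    simp only [Finset.mem_coe, Finset.mem_filter, Finset.mem_univ, true_and] at hpq ⊢
    obtain ⟨c1, c2, c3, c4, c5⟩ := hpq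
    by_cases h1 : g P = a
    · rw [if_pos h1]
      exact (main1 P Q c1 c2 c3 c4 c5 h1).1
    · rw [if_neg h1]
      exact (main2 P Q c1 c2 c3 c4 c5 h1).1
  · rintro ⟨P, Q⟩ hpq ⟨P', Q'⟩ hpq' heq
    simp only [Finset.coe_filter, Finset.mem_univ, true_and, Set.mem_setOf_eq] at hpq hpq'
    obtain ⟨c1, c2, c3, c4, c5⟩ := hpq
    obtain ⟨d1, d2, d3, d4, d5⟩ := hpq'
    simp only at heq
    by_cases h1 : g P = a <;> by_cases h2 : g P' = a
    · rw [if_pos h1, if_pos h2] at heq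
      have hQQ' : (ofLex Q.val).1 = (ofLex Q'.val).1 := (Prod.ext_iff.mp heq).2
      have hQa : g Q ≠ a := fun h => c4 (h1.trans h.symm)
      have hQ'a : g Q' ≠ a := fun h => d4 (h2.trans h.symm)
      have hQe : Q = Q' := coordinj Q Q' hQa hQ'a hQQ'
      subst hQe
      have hPe : P = P' := by
        rcases lt_trichotomy P P' with h | h | h
        · exact (d2.elim (c5 P' h d1).1 (c5 P' h d1).2).elim
        · exact h
        · exact (c2.elim (d5 P h c1).1 (d5 P h c1).2).elim
      rw [hPe]
    · rw [if_pos h1, if_neg h2] at heq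
      have e1 := (Prod.ext_iff.mp heq).1
      have r1 := (main1 P Q c1 c2 c3 c4 c5 h1).2
      have r2 := (main2 P' Q' d1 d2 d3 d4 d5 h2).2
      exact absurd (e1 ▸ r1) r2
    · rw [if_neg h1, if_pos h2] at heq
      have e1 := (Prod.ext_iff.mp heq).1
      have r1 := (main2 P Q c1 c2 c3 c4 c5 h1).2
      have r2 := (main1 P' Q' d1 d2 d3 d4 d5 h2).2
      exact absurd (e1 ▸ r2) r1
    · rw [if_neg h1, if_neg h2] at heq
      have hPP' : (ofLex P.val).1 = (ofLex P'.val).1 := (Prod.ext_iff.mp heq).1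
      have hPe : P = P' := coordinj P P' h1 h2 hPP'
      subst hPe
      have hQe : Q = Q' := by
        rcases lt_trichotomy Q Q' with h | h | h
        · exact (c3.elim (d5 Q c1 h).1 (d5 Q c1 h).2).elim
        · exact h
        · exact (d3.elim (c5 Q' d1 h).1 (c5 Q' d1 h).2).elim
      rw [hQe]
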